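/- Let U_e be the equilibrium distribution of a ℤ₊-valued random variable U with finite positive mean, and suppose U_e is long-tailed (lim_{k→∞} P(U_e>k+1)/P(U_e>k) = 1). Then for any h ∈ ℕ, l₀ ∈ ℤ₊ and ν ∈ {0,1,…,h−1}, (1/E[U]) · lim_{k→∞} (Σ_{l=l₀}^{∞} P(U > k + l·h + ν)) / P(U_e > k) = 1/h. -/

import Mathlib

open Filter Topology

/-- `P(U > k)` for a ℤ₊-valued random variable with pmf `p`. -/
noncomputable def tail (p : ℕ → ℝ) (k : ℕ) : ℝ := ∑' l : ℕ, p (k + 1 + l)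

/-- Mean of a ℤ₊-valued random variable with pmf `p`. -/
noncomputable def pmean (p : ℕ → ℝ) : ℝ := ∑' k : ℕ, (k : ℝ) * p k

lemma aux_tail_nonneg (p : ℕ → ℝ) (hnn : ∀ k, 0 ≤ p k) (k : ℕ) : 0 ≤ tail p k :=
  tsum_nonneg fun _ => hnn _

lemma aux_summable_shift (p : ℕ → ℝ) (hp : Summable p) (j : ℕ) :
    Summable fun m : ℕ => p (j + m) :=
  hp.comp_injective fun a b hab => by simpa using hab

lemma aux_tail_succ (p : ℕ → ℝ) (hp : Summable p) (k : ℕ) :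
    tail p k = p (k + 1) + tail p (k + 1) := by
  have hs : Summable fun l : ℕ => p (k + 1 + l) := aux_summable_shift p hp (k + 1)
  rw [tail, Summable.tsum_eq_zero_add hs, tail]
  have h1 : p (k + 1 + 0) = p (k + 1) := by norm_num
  rw [h1]
  exact congrArg (fun x => p (k + 1) + x)
    (tsum_congr fun b => by congr 1; omega)

lemma aux_tail_anti (p : ℕ → ℝ) (hnn : ∀ k, 0 ≤ p k) (hp : Summable p) :
    Antitone (tail p) := by
  apply antitone_nat_of_succ_le
  intro n
  rw [aux_tail_succ p hp n]
  have := hnn (n + 1)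
  linarith

lemma aux_summable_tail (p : ℕ → ℝ) (hnn : ∀ k, 0 ≤ p k) (hp : Summable p)
    (hmean : Summable fun k : ℕ => (k : ℝ) * p k) : Summable (tail p) := by
  have hg : ∀ k : ℕ, Summable fun m : ℕ => if k < m then p m else 0 := by
    intro k
    apply Summable.of_nonneg_of_le _ _ hp
    · intro m
      split
      · exact hnn m
      · exact le_rfl
    · intro m
      split
      · exact le_rfl
      · exact hnn m
  have key : ∀ k : ℕ, tail p k = ∑' m : ℕ, if k < m then p m else 0 := by
    intro k
    have hinj : Function.Injective (fun l : ℕ => k + 1 + l) := fun a b hab => by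
      simpa using hab
    have hsupp : Function.support (fun m : ℕ => if k < m then p m else 0) ⊆
        Set.range (fun l : ℕ => k + 1 + l) := by
      intro m hm
      by_cases hkm : k < m
      · refine ⟨m - (k + 1), ?_⟩
        show k + 1 + (m - (k + 1)) = m
        omega
      · simp only [Function.mem_support, if_neg hkm, ne_eq, not_true_eq_false] at hm
    have := Function.Injective.tsum_eq hinj hsupp
    rw [← this, tail]
    apply tsum_congr
    intro l
    rw [if_pos (by omega)]
  apply summable_of_sum_range_le (c := pmean p) (aux_tail_nonneg p hnn)
  intro N
  calc ∑ k ∈ Finset.range N, tail p k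
      = ∑ k ∈ Finset.range N, ∑' m : ℕ, if k < m then p m else 0 :=
        Finset.sum_congr rfl fun k _ => key k
    _ = ∑' m : ℕ, ∑ k ∈ Finset.range N, if k < m then p m else 0 :=
        (Summable.tsum_finsetSum fun k _ => hg k).symm
    _ = ∑' m : ℕ, ((min N m : ℕ) : ℝ) * p m := by
        apply tsum_congr
        intro m
        rw [← Finset.sum_filter, Finset.sum_const, nsmul_eq_mul]
        congr 2
        have : (Finset.range N).filter (fun k => k < m) = Finset.range (min N m) := by
          ext x
          simp only [Finset.mem_filter, Finset.mem_range, lt_min_iff]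
        rw [this, Finset.card_range]
    _ ≤ ∑' m : ℕ, (m : ℝ) * p m := by
        apply Summable.tsum_le_tsum _ _ hmean
        · intro m
          exact mul_le_mul_of_nonneg_right (Nat.cast_le.2 (min_le_right N m)) (hnn m)
        · apply Summable.of_nonneg_of_le _ _ hmean
          · intro m
            exact mul_nonneg (Nat.cast_nonneg _) (hnn m)
          · intro m
            exact mul_le_mul_of_nonneg_right (Nat.cast_le.2 (min_le_right N m)) (hnn m)
    _ = pmean p := rfl

lemma div_le_div_of_nonneg_right' {a b c : ℝ} (hab : a ≤ b) (hc : 0 < c) :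
    a / c ≤ b / c := by
  rw [div_le_div_iff₀ hc hc]
  nlinarith

/-- If the equilibrium distribution `U_e` (with pmf `k ↦ P(U>k)/E[U]`) is long-tailed,
then for every `h ≥ 1`, `l₀ ∈ ℤ₊` and `ν ∈ {0,…,h-1}`,
`(1/E[U]) · lim_k (Σ_{l ≥ l₀} P(U > k + lh + ν)) / P(U_e > k) = 1/h`, i.e. the limit
equals `E[U]/h`. -/
theorem stmt3 (p : ℕ → ℝ) (hnn : ∀ k, 0 ≤ p k) (hsum : HasSum p 1)
    (hmean : Summable fun k : ℕ => (k : ℝ) * p k) (hmeanpos : 0 < pmean p)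
    (htail : ∀ k, 0 < tail (fun k => tail p k / pmean p) k)
    (hlt : Tendsto
      (fun k => tail (fun k => tail p k / pmean p) (k + 1) /
        tail (fun k => tail p k / pmean p) k) atTop (nhds 1))
    (h : ℕ) (hh : 0 < h) (l₀ : ℕ) (ν : ℕ) (hν : ν < h) :
    Tendsto
      (fun k => (∑' l : ℕ, tail p (k + (l₀ + l) * h + ν)) /
        tail (fun k => tail p k / pmean p) k)
      atTop (nhds (pmean p / (h : ℝ))) := by
  have hNZ : NeZero h := ⟨hh.ne'⟩
  set T : ℕ → ℝ := tail p with hT_def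
  set μ : ℝ := pmean p with hμ_def
  set Te : ℕ → ℝ := tail (fun k => tail p k / pmean p) with hTe_def
  have hp : Summable p := hsum.summable
  have hμ0 : μ ≠ 0 := hmeanpos.ne'
  have hTsumm : Summable T := aux_summable_tail p hnn hp hmean
  have hTnn : ∀ k, 0 ≤ T k := aux_tail_nonneg p hnn
  have hTanti : Antitone T := aux_tail_anti p hnn hp
  -- key identity μ * Te j = ∑' m, T (j + 1 + m)
  have hTe_eq : ∀ j : ℕ, μ * Te j = ∑' m : ℕ, T (j + 1 + m) := by
    intro j
    have : Te j = (∑' m : ℕ, T (j + 1 + m)) / μ := by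
      rw [hTe_def, tail, ← tsum_div_const]
    rw [this]
    field_simp
  have hTshift : ∀ j : ℕ, Summable fun m : ℕ => T (j + m) := fun j =>
    aux_summable_shift T hTsumm j
  -- strided summability
  have hstride : ∀ j : ℕ, Summable fun l : ℕ => T (j + l * h) := by
    intro j
    apply hTsumm.comp_injective
    intro a b hab
    simp only at hab
    have : a * h = b * h := by omega
    exact Nat.eq_of_mul_eq_mul_right hh this
  -- block decomposition : μ * Te j = ∑' l, ∑ r : Fin h, T (j + 1 + (l * h + r))
  have hblocksum : ∀ j : ℕ, Summable fun x : ℕ × Fin h => T (j + 1 + (x.1 * h + ↑x.2)) := by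
    intro j
    have : Summable ((fun m : ℕ => T (j + 1 + m)) ∘ ((Nat.divModEquiv h).symm)) :=
      (hTshift (j + 1)).comp_injective (Equiv.injective _)
    have heq : ((fun m : ℕ => T (j + 1 + m)) ∘ ((Nat.divModEquiv h).symm)) =
        fun x : ℕ × Fin h => T (j + 1 + (x.1 * h + ↑x.2)) := by
      funext x
      simp [Nat.divModEquiv]
    rwa [heq] at this
  have hblockrow : ∀ j : ℕ, Summable fun l : ℕ => ∑ r : Fin h, T (j + 1 + (l * h + ↑r)) := by
    intro j
    apply summable_sum
    intro r _
    apply hTsumm.comp_injective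
    intro a b hab
    simp only at hab
    have : a * h = b * h := by omega
    exact Nat.eq_of_mul_eq_mul_right hh this
  have hblocks : ∀ j : ℕ, μ * Te j = ∑' l : ℕ, ∑ r : Fin h, T (j + 1 + (l * h + ↑r)) := by
    intro j
    rw [hTe_eq j]
    rw [← Equiv.tsum_eq ((Nat.divModEquiv h).symm) (fun m => T (j + 1 + m))]
    have heq : ∀ x : ℕ × Fin h, T (j + 1 + ((Nat.divModEquiv h).symm x)) =
        T (j + 1 + (x.1 * h + ↑x.2)) := by
      intro x
      simp [Nat.divModEquiv]
    rw [tsum_congr heq, Summable.tsum_prod' (hblocksum j)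
      (fun b => (Summable.of_finite : Summable fun r : Fin h => T (j + 1 + (b * h + ↑r))))]
    apply tsum_congr
    intro l
    rw [tsum_fintype]
  -- Lemma A : μ * Te j ≤ h * ∑' l, T (j + 1 + l * h)
  have lemA : ∀ j : ℕ, μ * Te j ≤ (h : ℝ) * ∑' l : ℕ, T (j + 1 + l * h) := by
    intro j
    rw [hblocks j, ← tsum_mul_left]
    refine Summable.tsum_le_tsum (fun l => ?_) (hblockrow j) ((hstride (j + 1)).mul_left _)
    calc ∑ r : Fin h, T (j + 1 + (l * h + ↑r))
          ≤ Finset.univ.card • T (j + 1 + l * h) := by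
            apply Finset.sum_le_card_nsmul
            intro r _
            exact hTanti (by omega)
        _ = (h : ℝ) * T (j + 1 + l * h) := by
            rw [Finset.card_univ, Fintype.card_fin, nsmul_eq_mul]
  -- Lemma B : h * ∑' l, T (j + 1 + l * h) ≤ h * T (j + 1) + μ * Te (j + 1)
  have lemB : ∀ j : ℕ, (h : ℝ) * ∑' l : ℕ, T (j + 1 + l * h) ≤
      (h : ℝ) * T (j + 1) + μ * Te (j + 1) := by
    intro j
    have hsplit : ∑' l : ℕ, T (j + 1 + l * h) = T (j + 1) + ∑' l : ℕ, T (j + 1 + (l + 1) * h) :=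
      by
      rw [Summable.tsum_eq_zero_add (hstride (j + 1))]
      congr 1
      congr 1
      omega
    rw [hsplit, mul_add]
    have key : (h : ℝ) * ∑' l : ℕ, T (j + 1 + (l + 1) * h) ≤ μ * Te (j + 1) := by
      rw [hblocks (j + 1), ← tsum_mul_left]
      have hsf : Summable fun l : ℕ => T (j + 1 + (l + 1) * h) := by
        apply hTsumm.comp_injective
        intro a b hab
        simp only at hab
        have h5 : (a + 1) * h = (b + 1) * h := by omega
        have h6 := Nat.eq_of_mul_eq_mul_right hh h5
        omega
      refine Summable.tsum_le_tsum (fun l => ?_) (hsf.mul_left _) (hblockrow (j + 1))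
      calc (h : ℝ) * T (j + 1 + (l + 1) * h)
            = (Finset.univ : Finset (Fin h)).card • T (j + 1 + (l + 1) * h) := by
              rw [Finset.card_univ, Fintype.card_fin, nsmul_eq_mul]
          _ ≤ ∑ r : Fin h, T (j + 1 + 1 + (l * h + ↑r)) := by
              apply Finset.card_nsmul_le_sum
              intro r _
              apply hTanti
              have := r.isLt
              have : j + 1 + 1 + (l * h + ↑r) ≤ j + 1 + (l + 1) * h := by
                have : (l + 1) * h = l * h + h := by ring
                omega
              exact this
    linarith
  -- positivity and antitonicity of Te
  have hTe_pos : ∀ k, 0 < Te k := htail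
  have hTe_anti : Antitone Te := by
    apply aux_tail_anti
    · intro k
      exact div_nonneg (hTnn k) hmeanpos.le
    · exact hTsumm.div_const _
  -- ratio limits
  have hratio_inv : Tendsto (fun k => Te k / Te (k + 1)) atTop (nhds 1) := by
    have h1 := hlt.inv₀ one_ne_zero
    rw [inv_one] at h1
    exact h1.congr fun k => by rw [inv_div]
  have hRc : ∀ c : ℕ, Tendsto (fun k => Te (k + c) / Te k) atTop (nhds 1) := by
    intro c
    induction c with
    | zero =>
      exact tendsto_const_nhds.congr fun k => by
        rw [Nat.add_zero, div_self (hTe_pos k).ne']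
    | succ c ih =>
      have h1 : Tendsto (fun k => Te (k + c + 1) / Te (k + c)) atTop (nhds 1) :=
        hlt.comp (tendsto_add_atTop_nat c)
      have h2 := h1.mul ih
      rw [one_mul] at h2
      refine h2.congr fun k => ?_
      show Te (k + c + 1) / Te (k + c) * (Te (k + c) / Te k) = Te (k + (c + 1)) / Te k
      rw [div_mul_div_comm, mul_comm (Te (k + c)) (Te k),
        mul_div_mul_right _ _ (hTe_pos (k + c)).ne', Nat.add_assoc]
  -- T k / Te k → 0
  have hTrec : ∀ j : ℕ, T (j + 1) = μ * Te j - μ * Te (j + 1) := by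
    intro j
    have h1 : μ * Te j = T (j + 1) + μ * Te (j + 1) := by
      rw [hTe_eq j, hTe_eq (j + 1), Summable.tsum_eq_zero_add (hTshift (j + 1))]
      have e0 : T (j + 1 + 0) = T (j + 1) := by norm_num
      rw [e0]
      exact congrArg (fun x => T (j + 1) + x)
        (tsum_congr fun m => by congr 1; omega)
    linarith
  have hg : Tendsto (fun k => T k / Te k) atTop (nhds 0) := by
    rw [← tendsto_add_atTop_iff_nat 1]
    have heq : ∀ k : ℕ, T (k + 1) / Te (k + 1) = μ * (Te k / Te (k + 1)) - μ := by
      intro k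
      rw [hTrec k, sub_div, mul_div_assoc, mul_div_assoc,
        div_self (hTe_pos (k + 1)).ne', mul_one]
    have : Tendsto (fun k => μ * (Te k / Te (k + 1)) - μ) atTop (nhds 0) := by
      have := (hratio_inv.const_mul μ).sub_const μ
      simpa using this
    exact this.congr fun k => (heq k).symm
  -- assemble
  set c : ℕ := l₀ * h + ν with hc_def
  have hS_eq : ∀ k : ℕ, 1 ≤ k →
      (∑' l : ℕ, tail p (k + (l₀ + l) * h + ν)) = ∑' l : ℕ, T ((k + c - 1) + 1 + l * h) := by
    intro k hk
    apply tsum_congr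
    intro l
    have he : k + (l₀ + l) * h + ν = (k + c - 1) + 1 + l * h := by
      rw [hc_def, Nat.add_mul]
      omega
    rw [he]
  have hlow : ∀ᶠ k in atTop, (μ / h) * (Te (k + c) / Te k) ≤
      (∑' l : ℕ, tail p (k + (l₀ + l) * h + ν)) / Te k := by
    filter_upwards [eventually_ge_atTop 1] with k hk
    rw [hS_eq k hk]
    have hhpos : (0 : ℝ) < h := Nat.cast_pos.2 hh
    have h1 := lemA (k + c - 1)
    have h2 : μ * Te (k + c) ≤ μ * Te (k + c - 1) :=
      mul_le_mul_of_nonneg_left (hTe_anti (by omega)) hmeanpos.le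
    have h3 : (μ / h) * Te (k + c) ≤ ∑' l : ℕ, T ((k + c - 1) + 1 + l * h) := by
      rw [div_mul_eq_mul_div, div_le_iff₀ hhpos]
      nlinarith
    calc (μ / h) * (Te (k + c) / Te k) = ((μ / h) * Te (k + c)) / Te k := by ring
      _ ≤ (∑' l : ℕ, T ((k + c - 1) + 1 + l * h)) / Te k :=
          div_le_div_of_nonneg_right' h3 (hTe_pos k)
  have hupp : ∀ᶠ k in atTop,
      (∑' l : ℕ, tail p (k + (l₀ + l) * h + ν)) / Te k ≤
        T (k + c) / Te (k + c) + (μ / h) * (Te (k + c) / Te k) := by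
    filter_upwards [eventually_ge_atTop 1] with k hk
    rw [hS_eq k hk]
    have hhpos : (0 : ℝ) < h := Nat.cast_pos.2 hh
    have he : k + c - 1 + 1 = k + c := by omega
    have h1 := lemB (k + c - 1)
    rw [he] at h1
    simp only [he]
    have h2 : (∑' l : ℕ, T (k + c + l * h)) ≤ T (k + c) + (μ / h) * Te (k + c) := by
      rw [div_mul_eq_mul_div, ← sub_nonneg]
      have heq2 : T (k + c) + μ * Te (k + c) / h - ∑' l : ℕ, T (k + c + l * h) =
          ((h : ℝ) * T (k + c) + μ * Te (k + c) -
            (h : ℝ) * ∑' l : ℕ, T (k + c + l * h)) / h := by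
        field_simp
      rw [heq2]
      apply div_nonneg _ hhpos.le
      linarith
    have h4 : (∑' l : ℕ, T (k + c + l * h)) / Te k ≤
        (T (k + c) + (μ / h) * Te (k + c)) / Te k :=
      div_le_div_of_nonneg_right' h2 (hTe_pos k)
    have h5 : T (k + c) / Te k ≤ T (k + c) / Te (k + c) := by
      rw [div_le_div_iff₀ (hTe_pos k) (hTe_pos (k + c))]
      have h6 : Te (k + c) ≤ Te k := hTe_anti (by omega)
      nlinarith [hTnn (k + c), hTe_pos (k + c)]
    calc (∑' l : ℕ, T (k + c + l * h)) / Te k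
        ≤ (T (k + c) + (μ / h) * Te (k + c)) / Te k := h4
      _ = T (k + c) / Te k + (μ / h) * (Te (k + c) / Te k) := by ring
      _ ≤ T (k + c) / Te (k + c) + (μ / h) * (Te (k + c) / Te k) := by linarith
  have hlim_low : Tendsto (fun k => (μ / h) * (Te (k + c) / Te k)) atTop (nhds (μ / h)) := by
    have := (hRc c).const_mul (μ / h)
    simpa using this
  have hlim_upp : Tendsto
      (fun k => T (k + c) / Te (k + c) + (μ / h) * (Te (k + c) / Te k))
      atTop (nhds (μ / h)) := by
    have h1 : Tendsto (fun k => T (k + c) / Te (k + c)) atTop (nhds 0) :=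
      (tendsto_add_atTop_iff_nat c).mpr hg
    have := h1.add hlim_low
    simpa using this
  exact tendsto_of_tendsto_of_tendsto_of_le_of_le' hlim_low hlim_upp hlow hupp
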